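/- Let m be an order function on ℝ^d, let N be a tempered positive Radon measure on ℝ^d, and let ρ be a nonnegative Schwartz-class function on ℝ^d with ∫_{ℝ^d} ρ(x) dx = 1 and ρ(0) > 0, such that N*ρ(x) ≤ m(x) for all x ∈ ℝ^d. Then there exist a constant C > 0 and an exponent ν ≥ 0, independent of Ω and r, such that for every subset Ω ⊆ ℝ^d and every r ≥ 1 one has N(∂Ω^{[0,r]}) ≤ C (1 + r)^ν ∫_{∂Ω^{[−1,1]}} m(x) dx. -/

import Mathlib

open MeasureTheory Metric Set Filter
open scoped ENNReal

noncomputable section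

/-- An order function on a normed space: positive, with polynomially controlled variation. -/
def IsOrderFunction {E : Type*} [NormedAddCommGroup E] (m : E → ℝ) : Prop :=
  (∀ x, 0 < m x) ∧ ∃ C ν : ℝ, 0 < C ∧ 0 ≤ ν ∧
    ∀ x y, m x ≤ C * (1 + ‖x - y‖) ^ ν * m y

/-- A tempered measure: `∫ (1+|y|)^{-k} dN(y) < ∞` for some `k ≥ 0`. -/
def IsTempered {d : ℕ} (N : Measure (EuclideanSpace ℝ (Fin d))) : Prop :=
  ∃ k : ℝ, 0 ≤ k ∧ ∫⁻ y, ENNReal.ofReal ((1 + ‖y‖) ^ (-k)) ∂N < ⊤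

/-- The convolution `N * ρ (x) = ∫ ρ(x - y) dN(y)`. -/
def mconv {d : ℕ} (N : Measure (EuclideanSpace ℝ (Fin d)))
    (ρ : EuclideanSpace ℝ (Fin d) → ℝ) (x : EuclideanSpace ℝ (Fin d)) : ℝ :=
  ∫ y, ρ (x - y) ∂N

/-- `∂Ω^{[a,b]}` for `0 ≤ a ≤ b`: points of `closure Ωᶜ` at distance in `[a,b]` from `Ω`. -/
def outerThick {d : ℕ} (Ω : Set (EuclideanSpace ℝ (Fin d))) (a b : ℝ) :
    Set (EuclideanSpace ℝ (Fin d)) :=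
  {x | x ∈ closure Ωᶜ ∧ a ≤ infDist x Ω ∧ infDist x Ω ≤ b}

/-- `∂Ω^{[-b,-a]}` for `0 ≤ a ≤ b`: points of `closure Ω` at distance in `[a,b]` from `Ωᶜ`. -/
def innerThick {d : ℕ} (Ω : Set (EuclideanSpace ℝ (Fin d))) (a b : ℝ) :
    Set (EuclideanSpace ℝ (Fin d)) :=
  {x | x ∈ closure Ω ∧ a ≤ infDist x Ωᶜ ∧ infDist x Ωᶜ ≤ b}

/-- `∂Ω^{[-1,1]}`, the unit thickening of the boundary of `Ω`. -/
def unitThick {d : ℕ} (Ω : Set (EuclideanSpace ℝ (Fin d))) :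
    Set (EuclideanSpace ℝ (Fin d)) :=
  innerThick Ω 0 1 ∪ outerThick Ω 0 1

/-! ### Auxiliary lemmas -/


lemma tempered_hasTemperateGrowth {d : ℕ} {N : Measure (EuclideanSpace ℝ (Fin d))}
    (hN : IsTempered N) : N.HasTemperateGrowth := by
  obtain ⟨k, hk0, hkfin⟩ := hN
  refine ⟨⟨⌈k⌉₊, ?_⟩⟩
  have hcont : Continuous fun x : EuclideanSpace ℝ (Fin d) => (1 + ‖x‖) ^ (-(⌈k⌉₊ : ℝ)) := by
    apply Continuous.rpow_const (continuous_const.add continuous_norm)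
    intro x; left; exact (add_pos_of_pos_of_nonneg one_pos (norm_nonneg x)).ne'
  have hnn : ∀ x : EuclideanSpace ℝ (Fin d), 0 ≤ (1 + ‖x‖) ^ (-(⌈k⌉₊ : ℝ)) := by
    intro x; positivity
  refine ⟨hcont.aestronglyMeasurable, ?_⟩
  rw [hasFiniteIntegral_iff_ofReal (Eventually.of_forall hnn)]
  refine lt_of_le_of_lt (lintegral_mono fun x => ?_) hkfin
  apply ENNReal.ofReal_le_ofReal
  apply Real.rpow_le_rpow_of_exponent_le (by simpa using norm_nonneg x)
  simp [neg_le_neg_iff, Nat.le_ceil k]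

lemma integrable_shift {d : ℕ} {N : Measure (EuclideanSpace ℝ (Fin d))}
    [N.HasTemperateGrowth] (ρ : SchwartzMap (EuclideanSpace ℝ (Fin d)) ℝ)
    (y : EuclideanSpace ℝ (Fin d)) :
    Integrable (fun z => ρ (y - z)) N := by
  have hdiff : Differentiable ℝ (fun z : EuclideanSpace ℝ (Fin d) => y - z) :=
    (differentiable_const y).sub differentiable_id
  have hg : Function.HasTemperateGrowth (fun z : EuclideanSpace ℝ (Fin d) => y - z) := by
    apply Function.HasTemperateGrowth.of_fderiv (k := 1) (C := 1 + ‖y‖) ?_ hdiff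
    · intro x
      have h1 : ‖y - x‖ ≤ ‖y‖ + ‖x‖ := norm_sub_le _ _
      have h2 : (0:ℝ) ≤ ‖y‖ := norm_nonneg _
      have h3 : (0:ℝ) ≤ ‖x‖ := norm_nonneg _
      calc ‖y - x‖ ≤ ‖y‖ + ‖x‖ := h1
        _ ≤ (1 + ‖y‖) * (1 + ‖x‖) ^ 1 := by nlinarith
    · have hder : (fderiv ℝ (fun z : EuclideanSpace ℝ (Fin d) => y - z))
          = fun _ => -(ContinuousLinearMap.id ℝ (EuclideanSpace ℝ (Fin d))) := by
        funext x
        rw [fderiv_fun_sub (differentiableAt_const y)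
          (g := fun z => z) differentiableAt_id]
        simp
      rw [hder]
      exact Function.HasTemperateGrowth.const _
  have hanti : AntilipschitzWith 1 (fun z : EuclideanSpace ℝ (Fin d) => y - z) := by
    refine Isometry.antilipschitz (Isometry.of_dist_eq fun a b => ?_)
    rw [dist_eq_norm, dist_eq_norm]
    have : (y - a) - (y - b) = -(a - b) := by abel
    rw [this, norm_neg]
  have := SchwartzMap.integrable (μ := N) (SchwartzMap.compCLMOfAntilipschitz ℝ hg hanti ρ)
  simpa [SchwartzMap.compCLMOfAntilipschitz_apply, Function.comp_def] using this

lemma ball_bound {d : ℕ} {m : EuclideanSpace ℝ (Fin d) → ℝ}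
    {N : Measure (EuclideanSpace ℝ (Fin d))} [IsLocallyFiniteMeasure N]
    (ρ : SchwartzMap (EuclideanSpace ℝ (Fin d)) ℝ)
    (hρpos : ∀ x, 0 ≤ ρ x) (hρ0 : 0 < ρ 0)
    (hint : ∀ y, Integrable (fun z => ρ (y - z)) N)
    (hbound : ∀ x, mconv N (fun z => ρ z) x ≤ m x) :
    ∃ ε c : ℝ, 0 < ε ∧ ε ≤ 1/2 ∧ 0 < c ∧
      ∀ y, N (ball y ε) ≤ ENNReal.ofReal (c * m y) := by
  obtain ⟨δ, hδ0, hδ⟩ : ∃ δ > 0, ∀ ⦃z : EuclideanSpace ℝ (Fin d)⦄,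
      dist z 0 < δ → dist (ρ z) (ρ 0) < ρ 0 / 2 :=
    Metric.eventually_nhds_iff.mp
      (Metric.tendsto_nhds.mp (ρ.continuous.tendsto 0) (ρ 0 / 2) (by linarith))
  refine ⟨min δ (1/2), 2 / ρ 0, lt_min hδ0 (by norm_num), min_le_right _ _,
    by positivity, fun y => ?_⟩
  set ε := min δ (1/2) with hε
  have hρlow : ∀ z ∈ ball y ε, ρ 0 / 2 ≤ ρ (y - z) := by
    intro z hz
    have hd : dist (y - z) 0 < δ := by
      rw [dist_zero_right, ← dist_eq_norm, dist_comm]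
      exact lt_of_lt_of_le (mem_ball.mp hz) (min_le_left _ _)
    have h2 := abs_lt.mp (by rw [← Real.dist_eq]; exact hδ hd)
    linarith [h2.1]
  have hfin : N (ball y ε) ≠ ⊤ := measure_ball_lt_top.ne
  have key : (ρ 0 / 2) * (N (ball y ε)).toReal ≤ m y := by
    have h1 : (ρ 0 / 2) * (N (ball y ε)).toReal ≤ ∫ z in ball y ε, ρ (y - z) ∂N :=
      by have := setIntegral_ge_of_const_le_real measurableSet_ball hfin hρlow (hint y).integrableOn
         exact this
    have h2 : ∫ z in ball y ε, ρ (y - z) ∂N ≤ ∫ z, ρ (y - z) ∂N :=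
      setIntegral_le_integral (hint y) (Eventually.of_forall fun z => hρpos _)
    have h3 : ∫ z, ρ (y - z) ∂N ≤ m y := hbound y
    linarith
  have htr : (N (ball y ε)).toReal ≤ 2 / ρ 0 * m y := by
    rw [div_mul_eq_mul_div, le_div_iff₀ hρ0]
    nlinarith [key]
  calc N (ball y ε) = ENNReal.ofReal ((N (ball y ε)).toReal) := (ENNReal.ofReal_toReal hfin).symm
    _ ≤ ENNReal.ofReal (2 / ρ 0 * m y) := ENNReal.ofReal_le_ofReal htr

lemma ball_subset_unitThick {d : ℕ} {Ω : Set (EuclideanSpace ℝ (Fin d))}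
    {q : EuclideanSpace ℝ (Fin d)} (h1 : infDist q Ω ≤ 1/2) (h2 : infDist q Ωᶜ ≤ 1/2) :
    ball q 4⁻¹ ⊆ unitThick Ω := by
  intro z hz
  have hd : dist z q < 4⁻¹ := mem_ball.mp hz
  have hz1 : infDist z Ω ≤ 1 :=
    le_trans (infDist_le_infDist_add_dist (y := q)) (by linarith)
  have hz2 : infDist z Ωᶜ ≤ 1 :=
    le_trans (infDist_le_infDist_add_dist (y := q)) (by linarith)
  by_cases hcl : z ∈ closure Ω
  · exact Or.inl ⟨hcl, infDist_nonneg, hz2⟩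
  · have : z ∈ Ωᶜ := fun hzo => hcl (subset_closure hzo)
    exact Or.inr ⟨subset_closure this, infDist_nonneg, hz1⟩

lemma exists_good_ball {d : ℕ} {Ω : Set (EuclideanSpace ℝ (Fin d))} {r : ℝ} (hr : 0 ≤ r)
    {z : EuclideanSpace ℝ (Fin d)} (hz : z ∈ outerThick Ω 0 r) :
    ∃ q, dist q z ≤ r + 2⁻¹ ∧ ball q 4⁻¹ ⊆ unitThick Ω := by
  obtain ⟨hzc, -, hzr⟩ := hz
  have hΩc : Ωᶜ.Nonempty := by
    rcases Set.eq_empty_or_nonempty Ωᶜ with h | h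
    · rw [h, closure_empty] at hzc; exact absurd hzc (notMem_empty z)
    · exact h
  by_cases hs : infDist z Ω ≤ 1/2
  · refine ⟨z, by simp [dist_self]; positivity, ball_subset_unitThick hs ?_⟩
    rw [(mem_closure_iff_infDist_zero hΩc).mp hzc]; norm_num
  · push_neg at hs
    have hΩ : Ω.Nonempty := by
      rcases Set.eq_empty_or_nonempty Ω with h | h
      · rw [h] at hs; simp [infDist_empty] at hs; linarith
      · exact h
    obtain ⟨p, hpΩ, hpd⟩ : ∃ p ∈ Ω, dist z p < infDist z Ω + 4⁻¹ :=
      (infDist_lt_iff hΩ).mp (by linarith)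
    set γ : ℝ → EuclideanSpace ℝ (Fin d) := fun t => z + t • (p - z) with hγ
    have hcont : Continuous fun t => infDist (γ t) Ω :=
      (continuous_infDist_pt Ω).comp
        (continuous_const.add (continuous_id.smul continuous_const))
    have h0 : infDist (γ 0) Ω = infDist z Ω := by simp [hγ]
    have h1 : infDist (γ 1) Ω = 0 := by
      have : γ 1 = p := by simp [hγ]
      rw [this]; exact infDist_zero_of_mem hpΩ
    obtain ⟨t, ht01, htv⟩ : ∃ t ∈ Icc (0:ℝ) 1, infDist (γ t) Ω = 1/2 := by
      have := intermediate_value_Icc' (by norm_num : (0:ℝ) ≤ 1) hcont.continuousOn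
      have hmem : (1/2 : ℝ) ∈ Icc (infDist (γ 1) Ω) (infDist (γ 0) Ω) := by
        rw [h0, h1]; exact ⟨by norm_num, le_of_lt hs⟩
      obtain ⟨t, ht, htv⟩ := this hmem
      exact ⟨t, ht, htv⟩
    refine ⟨γ t, ?_, ball_subset_unitThick (le_of_eq htv) ?_⟩
    · have : dist (γ t) z = ‖t • (p - z)‖ := by
        rw [dist_eq_norm, hγ]; simp
      rw [this, norm_smul]
      have h1t : ‖t‖ ≤ 1 := by rw [Real.norm_eq_abs, abs_of_nonneg ht01.1]; exact ht01.2
      have h2t : ‖p - z‖ = dist z p := by rw [dist_eq_norm, norm_sub_rev]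
      calc ‖t‖ * ‖p - z‖ ≤ 1 * dist z p := by
            rw [h2t]; exact mul_le_mul h1t le_rfl dist_nonneg zero_le_one
        _ ≤ r + 2⁻¹ := by rw [one_mul]; nlinarith [hzr, hpd]
    · have hq : γ t ∈ Ωᶜ := by
        intro hmem
        have := infDist_zero_of_mem hmem
        rw [this] at htv; norm_num at htv
      rw [infDist_zero_of_mem hq]; norm_num

lemma exists_maximal_separated {X : Type*} [MetricSpace X] (S : Set X) {ε : ℝ} (hε : 0 < ε) :
    ∃ Z ⊆ S, (∀ a ∈ Z, ∀ b ∈ Z, a ≠ b → ε ≤ dist a b) ∧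
      ∀ y ∈ S, ∃ z ∈ Z, dist y z < ε := by
  set Fam : Set (Set X) := {Z | Z ⊆ S ∧ ∀ a ∈ Z, ∀ b ∈ Z, a ≠ b → ε ≤ dist a b} with hFam
  obtain ⟨Z, hZmax⟩ : ∃ Z, Maximal (· ∈ Fam) Z := by
    apply zorn_subset
    intro c hcF hchain
    refine ⟨⋃₀ c, ⟨?_, ?_⟩, fun s hs => subset_sUnion_of_mem hs⟩
    · exact sUnion_subset fun s hs => (hcF hs).1
    · rintro a ⟨s, hs, has⟩ b ⟨t, ht, hbt⟩ hab
      rcases hchain.total hs ht with h | h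
      · exact (hcF ht).2 a (h has) b hbt hab
      · exact (hcF hs).2 a has b (h hbt) hab
  refine ⟨Z, hZmax.prop.1, hZmax.prop.2, fun y hy => ?_⟩
  by_contra hno
  push_neg at hno
  have hyZ : y ∉ Z := fun hyZ => by
    have := hno y hyZ; simp [dist_self] at this; linarith
  have hins : insert y Z ∈ Fam := by
    refine ⟨insert_subset hy hZmax.prop.1, ?_⟩
    rintro a (rfl | haZ) b (rfl | hbZ) hab
    · exact absurd rfl hab
    · exact hno b hbZ
    · rw [dist_comm]; exact hno a haZ
    · exact hZmax.prop.2 a haZ b hbZ hab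
  have := hZmax.eq_of_subset hins (subset_insert y Z)
  exact hyZ (this ▸ mem_insert y Z)

lemma countable_separated {d : ℕ} {Z : Set (EuclideanSpace ℝ (Fin d))} {ε : ℝ} (hε : 0 < ε)
    (hsep : ∀ a ∈ Z, ∀ b ∈ Z, a ≠ b → ε ≤ dist a b) : Z.Countable := by
  have : Z.PairwiseDisjoint (fun z => ball z (ε/2)) := by
    intro a ha b hb hab
    exact ball_disjoint_ball (by linarith [hsep a ha b hb hab])
  exact this.countable_of_isOpen (fun z _ => isOpen_ball)
    (fun z _ => nonempty_ball.mpr (by linarith))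

lemma lintegral_const_mul_le'' {α : Type*} [MeasurableSpace α] {μ : Measure α}
    {a : ℝ≥0∞} (ha : a ≠ ⊤) (g : α → ℝ≥0∞) :
    ∫⁻ x, a * g x ∂μ ≤ a * ∫⁻ x, g x ∂μ := by
  rcases eq_or_ne a 0 with rfl | ha0
  · simp
  · have h1 : a⁻¹ * ∫⁻ x, a * g x ∂μ ≤ ∫⁻ x, a⁻¹ * (a * g x) ∂μ := lintegral_const_mul_le _ _
    have h2 : ∀ x, a⁻¹ * (a * g x) = g x := by
      intro x; rw [← mul_assoc, ENNReal.inv_mul_cancel ha0 ha, one_mul]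
    simp_rw [h2] at h1
    calc ∫⁻ x, a * g x ∂μ = a * (a⁻¹ * ∫⁻ x, a * g x ∂μ) := by
          rw [← mul_assoc, ENNReal.mul_inv_cancel ha0 ha, one_mul]
      _ ≤ a * ∫⁻ x, g x ∂μ := mul_le_mul_right h1 a

lemma sum_lintegral_le {α ι : Type*} [MeasurableSpace α] {μ : Measure α}
    (F : Finset ι) (g : ι → α → ℝ≥0∞) :
    ∑ i ∈ F, ∫⁻ x, g i x ∂μ ≤ ∫⁻ x, ∑ i ∈ F, g i x ∂μ := by
  induction F using Finset.cons_induction with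
  | empty => simp
  | cons i F hi ih =>
    simp only [Finset.sum_cons]
    calc ∫⁻ x, g i x ∂μ + ∑ j ∈ F, ∫⁻ x, g j x ∂μ
        ≤ ∫⁻ x, g i x ∂μ + ∫⁻ x, ∑ j ∈ F, g j x ∂μ := add_le_add_right ih _
      _ ≤ ∫⁻ x, (g i x + ∑ j ∈ F, g j x) ∂μ := le_lintegral_add _ _


/-- The measure of the outer `r`-thickening of the boundary of `Ω` is controlled by the
integral of the order function over the unit thickening of the boundary. -/
theorem measure_outer_thickening_bound {d : ℕ} (m : EuclideanSpace ℝ (Fin d) → ℝ)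
    (hm : IsOrderFunction m)
    (N : Measure (EuclideanSpace ℝ (Fin d))) [IsLocallyFiniteMeasure N]
    (hN : IsTempered N)
    (ρ : SchwartzMap (EuclideanSpace ℝ (Fin d)) ℝ)
    (hρpos : ∀ x, 0 ≤ ρ x) (hρint : ∫ x, ρ x = 1) (hρ0 : 0 < ρ 0)
    (hbound : ∀ x, mconv N (fun z => ρ z) x ≤ m x) :
    ∃ C ν : ℝ, 0 < C ∧ 0 ≤ ν ∧
      ∀ (Ω : Set (EuclideanSpace ℝ (Fin d))) (r : ℝ), 1 ≤ r →
        N (outerThick Ω 0 r) ≤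
          ENNReal.ofReal (C * (1 + r) ^ ν) *
            ∫⁻ x in unitThick Ω, ENNReal.ofReal (m x) := by
  classical
  obtain ⟨hmpos, C₀, ν, hC₀, hν, hord⟩ := hm
  haveI : N.HasTemperateGrowth := tempered_hasTemperateGrowth hN
  obtain ⟨ε, c, hε0, hε2, hc0, hball⟩ := ball_bound ρ hρpos hρ0 (integrable_shift ρ) hbound
  set κ : ℝ≥0∞ := volume (ball (0 : EuclideanSpace ℝ (Fin d)) 4⁻¹) with hκdef
  have hκ0 : κ ≠ 0 := (measure_ball_pos _ _ (by norm_num)).ne'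
  have hκtop : κ ≠ ⊤ := measure_ball_lt_top.ne
  set V : ℝ := κ.toReal with hVdef
  have hV : 0 < V := ENNReal.toReal_pos hκ0 hκtop
  refine ⟨c * C₀ * (3:ℝ) ^ ν * (5 / ε) ^ d / V, ν + d, by positivity, by positivity, ?_⟩
  intro Ω r hr
  set S := outerThick Ω 0 r with hSdef
  set T := unitThick Ω with hTdef
  set R : ℝ := r + 2 with hRdef
  have hR1 : (1:ℝ) ≤ R := by simp [hRdef]; linarith
  set f : EuclideanSpace ℝ (Fin d) → ℝ≥0∞ := fun w => ENNReal.ofReal (m w) with hfdef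
  set I : ℝ≥0∞ := ∫⁻ w in T, f w with hIdef
  obtain ⟨Z, hZS, hZsep, hZnet⟩ := exists_maximal_separated S hε0
  have hZc : Z.Countable := countable_separated hε0 hZsep
  haveI := hZc.to_subtype
  -- Step 1 : cover S by balls centered at Z
  have step1 : N S ≤ ∑' z : Z, N (ball (z : EuclideanSpace ℝ (Fin d)) ε) := by
    refine le_trans (measure_mono ?_) (measure_iUnion_le _)
    intro y hy
    obtain ⟨z, hzZ, hd⟩ := hZnet y hy
    exact mem_iUnion.mpr ⟨⟨z, hzZ⟩, mem_ball.mpr hd⟩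
  -- the local integrals
  set J : EuclideanSpace ℝ (Fin d) → ℝ≥0∞ :=
    fun z => ∫⁻ w in T, (ball z R).indicator f w with hJdef
  set a : ℝ≥0∞ := ENNReal.ofReal (C₀ * (1 + R) ^ ν) with hadef
  set K : ℝ≥0∞ := ENNReal.ofReal c * (κ⁻¹ * a) with hKdef
  -- Step 2 : pointwise bound for centers in Z
  have step2 : ∀ z : EuclideanSpace ℝ (Fin d), z ∈ Z → N (ball z ε) ≤ K * J z := by
    intro z hzZ
    obtain ⟨q, hdq, hqsub⟩ := exists_good_ball (by linarith : (0:ℝ) ≤ r) (hZS hzZ)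
    -- pointwise indicator inequality
    have h1 : ∀ w, (ball q 4⁻¹).indicator (fun _ => ENNReal.ofReal (m z)) w
        ≤ a * (ball z R).indicator f w := by
      intro w
      by_cases hw : w ∈ ball q 4⁻¹
      · have hwz : w ∈ ball z R := by
          have h1' : dist w q < 4⁻¹ := mem_ball.mp hw
          have : dist w z ≤ dist w q + dist q z := dist_triangle w q z
          exact mem_ball.mpr (by rw [hRdef]; linarith)
        rw [indicator_of_mem hw, indicator_of_mem hwz]
        have hdzw : dist z w ≤ R := by
          rw [dist_comm]
          have h1' : dist w q < 4⁻¹ := mem_ball.mp hw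
          have : dist w z ≤ dist w q + dist q z := dist_triangle w q z
          rw [hRdef]; linarith
        have hmz : m z ≤ (C₀ * (1 + R) ^ ν) * m w := by
          have ho := hord z w
          have hrp : (1 + ‖z - w‖) ^ ν ≤ (1 + R) ^ ν := by
            apply Real.rpow_le_rpow (by positivity) _ hν
            have : ‖z - w‖ = dist z w := (dist_eq_norm z w).symm
            linarith [this ▸ hdzw]
          have hmw : 0 < m w := hmpos w
          calc m z ≤ C₀ * (1 + ‖z - w‖) ^ ν * m w := ho
            _ ≤ C₀ * (1 + R) ^ ν * m w :=
              mul_le_mul_of_nonneg_right (mul_le_mul_of_nonneg_left hrp hC₀.le) hmw.le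
        calc ENNReal.ofReal (m z) ≤ ENNReal.ofReal ((C₀ * (1 + R) ^ ν) * m w) :=
              ENNReal.ofReal_le_ofReal hmz
          _ = a * f w := by
              rw [hadef, hfdef, ENNReal.ofReal_mul (by positivity)]
      · rw [indicator_of_notMem hw]
        exact zero_le
    -- integrate
    have h2 : κ * ENNReal.ofReal (m z) ≤ a * J z := by
      have e1 : ∫⁻ w in T, (ball q 4⁻¹).indicator (fun _ => ENNReal.ofReal (m z)) w
          = ENNReal.ofReal (m z) * κ := by
        rw [lintegral_indicator measurableSet_ball, setLIntegral_const,
          Measure.restrict_apply measurableSet_ball,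
          inter_eq_left.mpr hqsub, Measure.addHaar_ball_center]
      have e2 : ∫⁻ w in T, a * (ball z R).indicator f w ≤ a * J z :=
        lintegral_const_mul_le'' ENNReal.ofReal_ne_top _
      calc κ * ENNReal.ofReal (m z) = ENNReal.ofReal (m z) * κ := mul_comm _ _
        _ = ∫⁻ w in T, (ball q 4⁻¹).indicator (fun _ => ENNReal.ofReal (m z)) w := e1.symm
        _ ≤ ∫⁻ w in T, a * (ball z R).indicator f w := lintegral_mono h1
        _ ≤ a * J z := e2
    have h3 : ENNReal.ofReal (m z) ≤ κ⁻¹ * (a * J z) := by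
      calc ENNReal.ofReal (m z) = κ⁻¹ * (κ * ENNReal.ofReal (m z)) := by
            rw [← mul_assoc, ENNReal.inv_mul_cancel hκ0 hκtop, one_mul]
        _ ≤ κ⁻¹ * (a * J z) := mul_le_mul_right h2 _
    calc N (ball z ε) ≤ ENNReal.ofReal (c * m z) := hball z
      _ = ENNReal.ofReal c * ENNReal.ofReal (m z) := ENNReal.ofReal_mul hc0.le
      _ ≤ ENNReal.ofReal c * (κ⁻¹ * (a * J z)) := mul_le_mul_right h3 _
      _ = K * J z := by rw [hKdef]; ring
  -- Step 4 : bounded multiplicity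
  set M : ℝ≥0∞ := ENNReal.ofReal ((2 * (R + ε) / ε) ^ d) with hMdef
  have step4 : ∀ F : Finset Z, ∑ z ∈ F, J (z : EuclideanSpace ℝ (Fin d)) ≤ M * I := by
    intro F
    have hpt : ∀ w, ∑ z ∈ F, (ball (z : EuclideanSpace ℝ (Fin d)) R).indicator f w
        ≤ M * f w := by
      intro w
      set F' : Finset Z :=
        F.filter (fun z : Z => w ∈ ball (z : EuclideanSpace ℝ (Fin d)) R) with hF'def
      have hsum : ∑ z ∈ F, (ball (z : EuclideanSpace ℝ (Fin d)) R).indicator f w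
          = (F'.card : ℝ≥0∞) * f w := by
        have h1 : ∑ z ∈ F, (ball (z : EuclideanSpace ℝ (Fin d)) R).indicator f w
            = ∑ z ∈ F, (if w ∈ ball (z : EuclideanSpace ℝ (Fin d)) R then f w else 0) := by
          refine Finset.sum_congr rfl fun z _ => ?_
          simp [Set.indicator_apply]
        rw [h1, ← Finset.sum_filter, ← hF'def, Finset.sum_const, nsmul_eq_mul]
      have hcard : (F'.card : ℝ≥0∞) ≤ M := by
        set B : ℝ≥0∞ := volume (ball (0 : EuclideanSpace ℝ (Fin d)) 1) with hBdef
        have hB0 : B ≠ 0 := (measure_ball_pos _ _ one_pos).ne'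
        have hBtop : B ≠ ⊤ := measure_ball_lt_top.ne
        have hdisj : (↑F' : Set Z).PairwiseDisjoint
            (fun z => ball (z : EuclideanSpace ℝ (Fin d)) (ε/2)) := by
          intro p hp q hq hpq
          have hne : (p : EuclideanSpace ℝ (Fin d)) ≠ (q : EuclideanSpace ℝ (Fin d)) :=
            fun h => hpq (Subtype.ext h)
          exact ball_disjoint_ball (by linarith [hZsep _ p.2 _ q.2 hne])
        have hunion : (⋃ z ∈ F', ball (z : EuclideanSpace ℝ (Fin d)) (ε/2))
            ⊆ ball w (R + ε) := by
          intro y hy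
          obtain ⟨z, hzF', hyz⟩ := mem_iUnion₂.mp hy
          have h1' : dist w (z : EuclideanSpace ℝ (Fin d)) < R :=
            mem_ball.mp (Finset.mem_filter.mp hzF').2
          have h2' : dist y (z : EuclideanSpace ℝ (Fin d)) < ε/2 := mem_ball.mp hyz
          have := dist_triangle y (z : EuclideanSpace ℝ (Fin d)) w
          rw [mem_ball]
          rw [dist_comm] at h1'
          linarith
        have hmeas : volume (⋃ z ∈ F', ball (z : EuclideanSpace ℝ (Fin d)) (ε/2))
            = ∑ z ∈ F', volume (ball (z : EuclideanSpace ℝ (Fin d)) (ε/2)) :=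
          measure_biUnion_finset hdisj (fun z _ => measurableSet_ball)
        have hvol : ∀ z : Z, volume (ball (z : EuclideanSpace ℝ (Fin d)) (ε/2))
            = ENNReal.ofReal ((ε/2) ^ d) * B := by
          intro z
          rw [Measure.addHaar_ball_of_pos _ _ (by positivity), finrank_euclideanSpace_fin]
        have hkey : (F'.card : ℝ≥0∞) * (ENNReal.ofReal ((ε/2) ^ d) * B)
            ≤ ENNReal.ofReal ((R + ε) ^ d) * B := by
          calc (F'.card : ℝ≥0∞) * (ENNReal.ofReal ((ε/2) ^ d) * B)
              = ∑ z ∈ F', volume (ball (z : EuclideanSpace ℝ (Fin d)) (ε/2)) := by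
                rw [Finset.sum_congr rfl (fun z _ => hvol z), Finset.sum_const, nsmul_eq_mul]
            _ = volume (⋃ z ∈ F', ball (z : EuclideanSpace ℝ (Fin d)) (ε/2)) := hmeas.symm
            _ ≤ volume (ball w (R + ε)) := measure_mono hunion
            _ = ENNReal.ofReal ((R + ε) ^ d) * B := by
                rw [Measure.addHaar_ball_of_pos _ _ (by positivity : (0:ℝ) < R + ε),
                  finrank_euclideanSpace_fin]
        have hMe : M * ENNReal.ofReal ((ε/2) ^ d) = ENNReal.ofReal ((R + ε) ^ d) := by
          have hbase : (2 * (R + ε) / ε) * (ε / 2) = R + ε := by field_simp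
          rw [hMdef, ← ENNReal.ofReal_mul (by positivity), ← mul_pow, hbase]
        have he0 : ENNReal.ofReal ((ε/2) ^ d) ≠ 0 :=
          (ENNReal.ofReal_pos.mpr (by positivity)).ne'
        have hetop : ENNReal.ofReal ((ε/2) ^ d) ≠ ⊤ := ENNReal.ofReal_ne_top
        rw [← mul_assoc] at hkey
        have := (ENNReal.mul_le_mul_iff_left hB0 hBtop).mp hkey
        rw [← hMe] at this
        exact (ENNReal.mul_le_mul_iff_left he0 hetop).mp this
      rw [hsum]
      exact mul_le_mul_left hcard _
    calc ∑ z ∈ F, J (z : EuclideanSpace ℝ (Fin d))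
        ≤ ∫⁻ w in T, ∑ z ∈ F, (ball (z : EuclideanSpace ℝ (Fin d)) R).indicator f w :=
          sum_lintegral_le F _
      _ ≤ ∫⁻ w in T, M * f w := lintegral_mono hpt
      _ ≤ M * I := lintegral_const_mul_le'' ENNReal.ofReal_ne_top _
  -- assemble
  have step5 : ∑' z : Z, J (z : EuclideanSpace ℝ (Fin d)) ≤ M * I := by
    rw [ENNReal.tsum_eq_iSup_sum]
    exact iSup_le step4
  have main : N S ≤ K * (M * I) := by
    calc N S ≤ ∑' z : Z, N (ball (z : EuclideanSpace ℝ (Fin d)) ε) := step1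
      _ ≤ ∑' z : Z, K * J (z : EuclideanSpace ℝ (Fin d)) :=
          ENNReal.tsum_le_tsum (fun z => step2 _ z.2)
      _ = K * ∑' z : Z, J (z : EuclideanSpace ℝ (Fin d)) := ENNReal.tsum_mul_left
      _ ≤ K * (M * I) := mul_le_mul_right step5 _
  -- final constant computation
  have hKM : K * M ≤ ENNReal.ofReal
      ((c * C₀ * (3:ℝ) ^ ν * (5 / ε) ^ d / V) * (1 + r) ^ (ν + (d:ℝ))) := by
    have hκinv : κ⁻¹ = ENNReal.ofReal V⁻¹ := by
      rw [ENNReal.ofReal_inv_of_pos hV, hVdef, ENNReal.ofReal_toReal hκtop]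
    have hKM' : K * M = ENNReal.ofReal
        (c * (V⁻¹ * (C₀ * (1 + R) ^ ν)) * (2 * (R + ε) / ε) ^ d) := by
      rw [hKdef, hMdef, hadef, hκinv, ← ENNReal.ofReal_mul (by positivity),
        ← ENNReal.ofReal_mul hc0.le, ← ENNReal.ofReal_mul (by positivity)]
    rw [hKM']
    apply ENNReal.ofReal_le_ofReal
    have hb1 : (1 + R) ^ ν ≤ (3:ℝ) ^ ν * (1 + r) ^ ν := by
      rw [← Real.mul_rpow (by norm_num) (by linarith)]
      apply Real.rpow_le_rpow (by linarith) (by linarith) hν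
    have hb2 : (2 * (R + ε) / ε) ^ d ≤ ((5 / ε) * (1 + r)) ^ d := by
      have he : (5:ℝ) / ε * (1 + r) = 5 * (1 + r) / ε := by ring
      rw [he]
      apply pow_le_pow_left₀ (by positivity)
      have h5 : 2 * (R + ε) ≤ 5 * (1 + r) := by rw [hRdef]; linarith
      rw [div_eq_mul_inv, div_eq_mul_inv]
      exact mul_le_mul_of_nonneg_right h5 (by positivity)
    have hrnm : (1 + r) ^ (ν + (d:ℝ)) = (1 + r) ^ ν * (1 + r) ^ d := by
      rw [Real.rpow_add (by linarith), Real.rpow_natCast]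
    calc c * (V⁻¹ * (C₀ * (1 + R) ^ ν)) * (2 * (R + ε) / ε) ^ d
        ≤ c * (V⁻¹ * (C₀ * ((3:ℝ) ^ ν * (1 + r) ^ ν))) * (((5 / ε) * (1 + r)) ^ d) := by
          gcongr <;> first
            | exact hb1
            | exact hb2
            | positivity
            | exact mul_nonneg hc0.le (by positivity)
      _ = (c * C₀ * (3:ℝ) ^ ν * (5 / ε) ^ d / V) * (1 + r) ^ (ν + (d:ℝ)) := by
          rw [hrnm, mul_pow]
          field_simp
  calc N S ≤ K * (M * I) := main
    _ = (K * M) * I := (mul_assoc K M I).symm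
    _ ≤ ENNReal.ofReal ((c * C₀ * (3:ℝ) ^ ν * (5 / ε) ^ d / V) * (1 + r) ^ (ν + (d:ℝ))) * I :=
        mul_le_mul_left hKM _


end
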